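/- Let {B_{a|x}} be a measurement assemblage, E a positive linear map on d×d matrices, and ρ a density matrix with p = tr[E(ρ)] > 0. Then SR( ρ^{1/2} E†(B) ρ^{1/2} / p ) ≤ IR(B), where E†(B) denotes the family {E†(B_{a|x})}. -/

import Mathlib

open Matrix Kronecker BigOperators ComplexOrder

noncomputable section

/-- A density matrix: positive semidefinite with unit trace. -/
def IsDensity {d : ℕ} (ρ : Matrix (Fin d) (Fin d) ℂ) : Prop :=
  ρ.PosSemidef ∧ ρ.trace = 1

/-- A POVM: positive semidefinite effects summing to the identity. -/
def IsPOVM {d nl : ℕ} (G : Fin nl → Matrix (Fin d) (Fin d) ℂ) : Prop :=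
  (∀ l, (G l).PosSemidef) ∧ ∑ l, G l = 1

/-- A measurement assemblage: for each setting `x`, a POVM `a ↦ M x a`. -/
def IsMA {d na nx : ℕ} (M : Fin nx → Fin na → Matrix (Fin d) (Fin d) ℂ) : Prop :=
  (∀ x a, (M x a).PosSemidef) ∧ ∀ x, ∑ a, M x a = 1

/-- Joint measurability: `M x a = ∑ λ p(a|x,λ) G λ` for a parent POVM `G`. -/
def JM {d na nx : ℕ} (M : Fin nx → Fin na → Matrix (Fin d) (Fin d) ℂ) : Prop :=
  ∃ (nl : ℕ) (G : Fin nl → Matrix (Fin d) (Fin d) ℂ)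
    (p : Fin nx → Fin na → Fin nl → ℝ),
    IsPOVM G ∧ (∀ x a l, 0 ≤ p x a l) ∧ (∀ x l, ∑ a, p x a l = 1) ∧
    ∀ x a, M x a = ∑ l, (p x a l : ℂ) • G l

/-- A state assemblage: PSD elements with an `x`-independent reduced density matrix. -/
def IsSA {d na nx : ℕ} (σ : Fin nx → Fin na → Matrix (Fin d) (Fin d) ℂ) : Prop :=
  (∀ x a, (σ x a).PosSemidef) ∧
  ∃ ρ : Matrix (Fin d) (Fin d) ℂ, IsDensity ρ ∧ ∀ x, ∑ a, σ x a = ρ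

/-- Local-hidden-state model: `σ x a = ∑ λ q(λ) p(a|x,λ) ρ_λ`. -/
def LHS {d na nx : ℕ} (σ : Fin nx → Fin na → Matrix (Fin d) (Fin d) ℂ) : Prop :=
  ∃ (nl : ℕ) (q : Fin nl → ℝ) (p : Fin nx → Fin na → Fin nl → ℝ)
    (ρ : Fin nl → Matrix (Fin d) (Fin d) ℂ),
    (∀ l, 0 ≤ q l) ∧ (∑ l, q l = 1) ∧
    (∀ x a l, 0 ≤ p x a l) ∧ (∀ x l, ∑ a, p x a l = 1) ∧
    (∀ l, IsDensity (ρ l)) ∧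
    ∀ x a, σ x a = ∑ l, ((q l * p x a l : ℝ) : ℂ) • ρ l

/-- Incompatibility robustness. -/
def IR {d na nx : ℕ} (B : Fin nx → Fin na → Matrix (Fin d) (Fin d) ℂ) : ℝ :=
  sInf {t : ℝ | 0 ≤ t ∧ ∃ N, IsMA N ∧
    JM (fun x a => (((1 + t : ℝ))⁻¹ : ℂ) • (B x a + (t : ℂ) • N x a))}

/-- Steering robustness. -/
def SR {d na nx : ℕ} (σ : Fin nx → Fin na → Matrix (Fin d) (Fin d) ℂ) : ℝ :=
  sInf {t : ℝ | 0 ≤ t ∧ ∃ ξ, IsSA ξ ∧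
    LHS (fun x a => (((1 + t : ℝ))⁻¹ : ℂ) • (σ x a + (t : ℂ) • ξ x a))}

/-- Incompatible weight. -/
def IW {d na nx : ℕ} (B : Fin nx → Fin na → Matrix (Fin d) (Fin d) ℂ) : ℝ :=
  sInf {t : ℝ | 0 ≤ t ∧ t ≤ 1 ∧ ∃ N O, IsMA N ∧ JM O ∧
    ∀ x a, B x a = (t : ℂ) • N x a + ((1 - t : ℝ) : ℂ) • O x a}

/-- Steerable weight. -/
def SW {d na nx : ℕ} (σ : Fin nx → Fin na → Matrix (Fin d) (Fin d) ℂ) : ℝ :=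
  sInf {t : ℝ | 0 ≤ t ∧ t ≤ 1 ∧ ∃ ξ τ, IsSA ξ ∧ LHS τ ∧
    ∀ x a, σ x a = (t : ℂ) • ξ x a + ((1 - t : ℝ) : ℂ) • τ x a}

/-- Positive map on matrices. -/
def PosMap {d : ℕ} (E : Matrix (Fin d) (Fin d) ℂ →ₗ[ℂ] Matrix (Fin d) (Fin d) ℂ) : Prop :=
  ∀ X, X.PosSemidef → (E X).PosSemidef

/-- Trace-nonincreasing on PSD matrices. -/
def TNI {d : ℕ} (E : Matrix (Fin d) (Fin d) ℂ →ₗ[ℂ] Matrix (Fin d) (Fin d) ℂ) : Prop :=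
  ∀ X : Matrix (Fin d) (Fin d) ℂ, X.PosSemidef → (E X).trace.re ≤ X.trace.re

/-- `Ed` is the Hilbert–Schmidt adjoint of `E`. -/
def IsAdjoint {d : ℕ} (E Ed : Matrix (Fin d) (Fin d) ℂ →ₗ[ℂ] Matrix (Fin d) (Fin d) ℂ) : Prop :=
  ∀ X Y, ((E X)ᴴ * Y).trace = (Xᴴ * (Ed Y)).trace

/-- Partial trace over the first tensor factor. -/
def ptraceA {d d' : ℕ} (M : Matrix (Fin d × Fin d') (Fin d × Fin d') ℂ) :
    Matrix (Fin d') (Fin d') ℂ :=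
  Matrix.of fun i j => ∑ k : Fin d, M (k, i) (k, j)

/-- The map `E ⊗ id` acting on bipartite matrices. -/
def tensId {d d' : ℕ} (E : Matrix (Fin d) (Fin d) ℂ →ₗ[ℂ] Matrix (Fin d) (Fin d) ℂ)
    (M : Matrix (Fin d × Fin d') (Fin d × Fin d') ℂ) :
    Matrix (Fin d × Fin d') (Fin d × Fin d') ℂ :=
  Matrix.of fun p q => E (Matrix.of fun i k => M (i, p.2) (k, q.2)) p.1 q.1

/-- The square root of a positive semidefinite matrix, as Mathlib (Dec 2024) defined it. -/
def Matrix.PosSemidef.sqrt {n 𝕜 : Type*} [Fintype n] [DecidableEq n] [RCLike 𝕜]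
    {A : Matrix n n 𝕜} (hA : A.PosSemidef) : Matrix n n 𝕜 :=
  hA.1.eigenvectorUnitary.1 * diagonal ((↑) ∘ (√·) ∘ hA.1.eigenvalues) *
    (star hA.1.eigenvectorUnitary : Matrix n n 𝕜)

lemma Matrix.PosSemidef.posSemidef_sqrt {d : ℕ} {A : Matrix (Fin d) (Fin d) ℂ}
    (hA : A.PosSemidef) : hA.sqrt.PosSemidef := by
  unfold Matrix.PosSemidef.sqrt
  have h1 : (diagonal ((↑) ∘ (√·) ∘ hA.1.eigenvalues : Fin d → ℂ)).PosSemidef :=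
    Matrix.PosSemidef.diagonal fun i => by
      simp only [Pi.zero_apply, Function.comp_apply]
      exact RCLike.ofReal_nonneg.mpr (Real.sqrt_nonneg _)
  have h2 := h1.mul_mul_conjTranspose_same (hA.1.eigenvectorUnitary : Matrix (Fin d) (Fin d) ℂ)
  rw [Matrix.star_eq_conjTranspose]
  exact h2

lemma Matrix.PosSemidef.sqrt_mul_self {d : ℕ} {A : Matrix (Fin d) (Fin d) ℂ}
    (hA : A.PosSemidef) : hA.sqrt * hA.sqrt = A := by
  unfold Matrix.PosSemidef.sqrt
  have hU := Unitary.coe_star_mul_self hA.1.eigenvectorUnitary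
  simp only [Matrix.mul_assoc]
  rw [← Matrix.mul_assoc (star (hA.1.eigenvectorUnitary : Matrix (Fin d) (Fin d) ℂ)), hU, Matrix.one_mul,
    ← Matrix.mul_assoc (diagonal _), diagonal_mul_diagonal]
  conv_rhs => rw [hA.1.spectral_theorem, Unitary.conjStarAlgAut_apply]
  rw [Matrix.mul_assoc]
  congr 3
  funext i
  simp only [Function.comp_apply]
  rw [← RCLike.ofReal_mul, Real.mul_self_sqrt (hA.eigenvalues_nonneg i)]


section AuxLemmas

variable {d : ℕ}

lemma psd_smul_real {A : Matrix (Fin d) (Fin d) ℂ} (hA : A.PosSemidef) {c : ℝ} (hc : 0 ≤ c) :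
    ((c : ℂ) • A).PosSemidef := by
  constructor
  · rw [Matrix.IsHermitian, conjTranspose_smul, hA.1]
    simp
  · intro v
    exact (hA.smul (a := (c:ℂ)) (by exact_mod_cast hc)).2 v

lemma psd_sum {ι : Type*} (s : Finset ι) (f : ι → Matrix (Fin d) (Fin d) ℂ)
    (h : ∀ i ∈ s, (f i).PosSemidef) : (∑ i ∈ s, f i).PosSemidef := by
  classical
  induction s using Finset.induction_on with
  | empty => simpa using Matrix.PosSemidef.zero
  | insert a s hx ih =>
    rw [Finset.sum_insert hx]
    exact ((h _ (Finset.mem_insert_self _ _)).add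
      (ih fun i hi => h i (Finset.mem_insert_of_mem hi)))

lemma psd_trace_nonneg {A : Matrix (Fin d) (Fin d) ℂ} (hA : A.PosSemidef) : 0 ≤ A.trace := by
  have hdiag : ∀ i, 0 ≤ A i i := by
    intro i
    simpa [dotProduct, Pi.single_apply, apply_ite] using hA.dotProduct_mulVec_nonneg (Pi.single i 1)
  exact Finset.sum_nonneg fun i _ => hdiag i

lemma psd_trace_re {A : Matrix (Fin d) (Fin d) ℂ} (hA : A.PosSemidef) :
    A.trace = (A.trace.re : ℂ) := by
  have h := psd_trace_nonneg hA
  rw [Complex.le_def] at h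
  exact (Complex.ext (by simp) (by simp [← h.2])).symm

lemma psd_trace_re_nonneg {A : Matrix (Fin d) (Fin d) ℂ} (hA : A.PosSemidef) :
    0 ≤ A.trace.re := by
  have h := psd_trace_nonneg hA
  rw [Complex.le_def] at h
  simpa using h.1

lemma psd_trace_eq_zero {A : Matrix (Fin d) (Fin d) ℂ} (hA : A.PosSemidef)
    (h : A.trace = 0) : A = 0 := by
  obtain ⟨B, rfl⟩ : ∃ B : Matrix (Fin d) (Fin d) ℂ, A = Bᴴ * B :=
    ⟨hA.sqrt, by rw [hA.posSemidef_sqrt.1, hA.sqrt_mul_self]⟩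
  have hB : B = 0 := by
    have hsum : ∑ j, ∑ i, Complex.normSq (B i j) = 0 := by
      simp only [Matrix.trace, Matrix.diag, Matrix.mul_apply, Matrix.conjTranspose_apply] at h
      have h2 : ((∑ j, ∑ i, (Complex.normSq (B i j) : ℂ)) : ℂ) = 0 := by
        rw [← h]
        congr 1; ext j; congr 1; ext i
        rw [Complex.normSq_eq_conj_mul_self]; rfl
      exact_mod_cast h2
    ext i j
    have h3 := (Finset.sum_eq_zero_iff_of_nonneg
      (fun j _ => Finset.sum_nonneg fun i _ => Complex.normSq_nonneg _)).mp hsum j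
      (Finset.mem_univ _)
    have h4 := (Finset.sum_eq_zero_iff_of_nonneg
      (fun i _ => Complex.normSq_nonneg _)).mp h3 i (Finset.mem_univ _)
    simpa using Complex.normSq_eq_zero.mp h4
  rw [hB]; simp

lemma trace_psd_mul_nonneg {A B : Matrix (Fin d) (Fin d) ℂ} (hA : A.PosSemidef)
    (hB : B.PosSemidef) : 0 ≤ (A * B).trace := by
  obtain ⟨C, rfl⟩ : ∃ C : Matrix (Fin d) (Fin d) ℂ, A = Cᴴ * C :=
    ⟨hA.sqrt, by rw [hA.posSemidef_sqrt.1, hA.sqrt_mul_self]⟩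
  rw [Matrix.mul_assoc, Matrix.trace_mul_comm]
  exact psd_trace_nonneg (hB.mul_mul_conjTranspose_same C)

lemma quadform_eq_trace (A : Matrix (Fin d) (Fin d) ℂ) (v : Fin d → ℂ) :
    dotProduct (star v) (A *ᵥ v) = (A * vecMulVec v (star v)).trace := by
  simp only [Matrix.trace, Matrix.diag, Matrix.mul_apply, Matrix.vecMulVec_apply,
    dotProduct, Matrix.mulVec, Pi.star_apply]
  congr 1; ext i
  rw [Finset.mul_sum]
  congr 1; ext j
  ring

lemma psd_vecMulVec (v : Fin d → ℂ) : (vecMulVec v (star v)).PosSemidef := by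
  exact Matrix.posSemidef_vecMulVec_self_star v

lemma herm_decomp {A : Matrix (Fin d) (Fin d) ℂ} (hA : A.IsHermitian) :
    ∃ P Q : Matrix (Fin d) (Fin d) ℂ, P.PosSemidef ∧ Q.PosSemidef ∧ A = P - Q := by
  classical
  set U : Matrix (Fin d) (Fin d) ℂ := (hA.eigenvectorUnitary : Matrix (Fin d) (Fin d) ℂ)
  refine ⟨U * Matrix.diagonal (fun i => ((max (hA.eigenvalues i) 0 : ℝ) : ℂ)) * star U,
      U * Matrix.diagonal (fun i => ((max (-hA.eigenvalues i) 0 : ℝ) : ℂ)) * star U, ?_, ?_, ?_⟩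
  · have h1 : (Matrix.diagonal (fun i => ((max (hA.eigenvalues i) 0 : ℝ) : ℂ))).PosSemidef :=
      Matrix.PosSemidef.diagonal fun i => by positivity
    have h2 := h1.mul_mul_conjTranspose_same U
    rw [Matrix.star_eq_conjTranspose]; exact h2
  · have h1 : (Matrix.diagonal (fun i => ((max (-hA.eigenvalues i) 0 : ℝ) : ℂ))).PosSemidef :=
      Matrix.PosSemidef.diagonal fun i => by positivity
    have h2 := h1.mul_mul_conjTranspose_same U
    rw [Matrix.star_eq_conjTranspose]; exact h2
  · conv_lhs => rw [hA.spectral_theorem]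
    rw [← Matrix.sub_mul, ← Matrix.mul_sub, Matrix.diagonal_sub]
    have hfun : (RCLike.ofReal ∘ hA.eigenvalues : Fin d → ℂ) =
        fun i => ((max (hA.eigenvalues i) 0 : ℝ) : ℂ) - ((max (-hA.eigenvalues i) 0 : ℝ) : ℂ) := by
      ext i
      simp only [Function.comp_apply]
      rcases le_total (hA.eigenvalues i) 0 with h | h
      · rw [max_eq_right h, max_eq_left (by linarith : (0:ℝ) ≤ -hA.eigenvalues i)]
        push_cast
        ring_nf
        rfl
      · rw [max_eq_left h, max_eq_right (by linarith : -hA.eigenvalues i ≤ 0)]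
        push_cast
        ring_nf
        rfl
    rw [hfun]
    rfl

variable {E Ed : Matrix (Fin d) (Fin d) ℂ →ₗ[ℂ] Matrix (Fin d) (Fin d) ℂ}

lemma posmap_herm (hE : PosMap E) {X : Matrix (Fin d) (Fin d) ℂ} (hX : X.IsHermitian) :
    (E X).IsHermitian := by
  obtain ⟨P, Q, hP, hQ, rfl⟩ := herm_decomp hX
  rw [map_sub]
  exact ((hE P hP).1).sub ((hE Q hQ).1)

lemma posmap_map_conjTranspose (hE : PosMap E) (X : Matrix (Fin d) (Fin d) ℂ) :
    E (Xᴴ) = (E X)ᴴ := by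
  obtain ⟨H, hHdef⟩ : ∃ H : Matrix (Fin d) (Fin d) ℂ, H = ((1:ℂ)/2) • (X + Xᴴ) := ⟨_, rfl⟩
  obtain ⟨K, hKdef⟩ : ∃ K : Matrix (Fin d) (Fin d) ℂ, K = (Complex.I/2) • (Xᴴ - X) := ⟨_, rfl⟩
  have hH : H.IsHermitian := by
    rw [hHdef, Matrix.IsHermitian, conjTranspose_smul, conjTranspose_add,
      conjTranspose_conjTranspose]
    rw [show star ((1:ℂ)/2) = (1:ℂ)/2 by simp]
    rw [add_comm]
  have hK : K.IsHermitian := by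
    rw [hKdef, Matrix.IsHermitian, conjTranspose_smul, conjTranspose_sub,
      conjTranspose_conjTranspose]
    rw [show star (Complex.I/2) = -(Complex.I/2) by simp [Complex.ext_iff]; norm_num]
    rw [neg_smul, ← smul_neg, neg_sub]
  have hX1 : X = H + Complex.I • K := by
    rw [hHdef, hKdef, smul_smul]
    rw [show Complex.I * (Complex.I/2) = -((1:ℂ)/2) by
      rw [mul_div_assoc', Complex.I_mul_I]; norm_num]
    module
  have hX2 : Xᴴ = H - Complex.I • K := by
    conv_lhs => rw [hX1]
    rw [conjTranspose_add, conjTranspose_smul, hH, hK]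
    simp [Complex.conj_I, sub_eq_add_neg, neg_smul]
  rw [hX2, hX1, map_sub, map_add, _root_.map_smul, conjTranspose_add, conjTranspose_smul,
    posmap_herm hE hH, posmap_herm hE hK]
  simp [Complex.conj_I, sub_eq_add_neg, neg_smul]

lemma adjoint_psd (hE : PosMap E) (hadj : IsAdjoint E Ed) {Y : Matrix (Fin d) (Fin d) ℂ}
    (hY : Y.PosSemidef) : (Ed Y).PosSemidef := by
  set A : Matrix (Fin d) (Fin d) ℂ := Ed Y with hAdef
  have key : ∀ X : Matrix (Fin d) (Fin d) ℂ, (Xᴴ * Aᴴ).trace = (Xᴴ * A).trace := by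
    intro X
    have h1 : (Xᴴ * A).trace = ((E X)ᴴ * Y).trace := (hadj X Y).symm
    have h2 : (Xᴴ * Aᴴ).trace = star ((A * X).trace) := by
      rw [← Matrix.trace_conjTranspose, Matrix.conjTranspose_mul]
    rw [h1, h2, Matrix.trace_mul_comm A X,
      show (X * A).trace = ((Xᴴ)ᴴ * A).trace by rw [Matrix.conjTranspose_conjTranspose],
      ← hadj (Xᴴ) Y, posmap_map_conjTranspose hE, Matrix.conjTranspose_conjTranspose,
      ← Matrix.trace_conjTranspose, Matrix.conjTranspose_mul, ← hY.1,
      Matrix.conjTranspose_conjTranspose, Matrix.trace_mul_comm]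
    rw [hY.1]
  have hherm : A.IsHermitian := by
    have h0 : ((A - Aᴴ)ᴴ * (A - Aᴴ)).trace = 0 := by
      have h1 : ((A - Aᴴ)ᴴ * (A - Aᴴ)) = (A - Aᴴ)ᴴ * A - (A - Aᴴ)ᴴ * Aᴴ := by
        rw [Matrix.mul_sub]
      rw [h1, Matrix.trace_sub, key (A - Aᴴ), sub_self]
    have h2 := psd_trace_eq_zero (Matrix.posSemidef_conjTranspose_mul_self (A - Aᴴ)) h0
    have h3 : A - Aᴴ = 0 := Matrix.conjTranspose_mul_self_eq_zero.mp h2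
    exact (sub_eq_zero.mp h3).symm
  refine Matrix.PosSemidef.of_dotProduct_mulVec_nonneg hherm fun v => ?_
  rw [quadform_eq_trace, Matrix.trace_mul_comm]
  have hP := psd_vecMulVec v
  rw [← hP.1, ← hadj, (hE _ hP).1]
  exact trace_psd_mul_nonneg (hE _ hP) hY

end AuxLemmas

/-- SR(ρ^{1/2} E†(B) ρ^{1/2} / p) ≤ IR(B) for a positive map E. -/
theorem sr_filtered_heisenberg_le_ir {d na nx : ℕ}
    (B : Fin nx → Fin na → Matrix (Fin d) (Fin d) ℂ) (hB : IsMA B)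
    (E Ed : Matrix (Fin d) (Fin d) ℂ →ₗ[ℂ] Matrix (Fin d) (Fin d) ℂ)
    (hE : PosMap E) (hadj : IsAdjoint E Ed)
    (ρ : Matrix (Fin d) (Fin d) ℂ) (hρ : ρ.PosSemidef) (hρ1 : ρ.trace = 1)
    (hp : 0 < (E ρ).trace.re) :
    SR (fun x a => ((((E ρ).trace.re)⁻¹ : ℝ) : ℂ) •
        (hρ.sqrt * Ed (B x a) * hρ.sqrt)) ≤ IR B := by
  classical
  have hd : 0 < d := by
    rcases Nat.eq_zero_or_pos d with hd | hd
    · subst hd; simp [Matrix.trace] at hρ1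
    · exact hd
  have hpne : (E ρ).trace.re ≠ 0 := ne_of_gt hp
  set S : Matrix (Fin d) (Fin d) ℂ := hρ.sqrt with hSdef
  set c : ℝ := ((E ρ).trace.re)⁻¹ with hcdef
  have hSherm : Sᴴ = S := hρ.posSemidef_sqrt.1
  have hc0 : 0 ≤ c := inv_nonneg.mpr hp.le
  have hTpsd : ∀ {Y : Matrix (Fin d) (Fin d) ℂ}, Y.PosSemidef →
      ((c:ℂ) • (S * Ed Y * S)).PosSemidef := by
    intro Y hY
    apply psd_smul_real _ hc0
    have h := (adjoint_psd hE hadj hY).mul_mul_conjTranspose_same S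
    rwa [hSherm] at h
  have hTsum : ∀ {m : ℕ} (f : Fin m → Matrix (Fin d) (Fin d) ℂ),
      (c:ℂ) • (S * Ed (∑ a, f a) * S) = ∑ a, (c:ℂ) • (S * Ed (f a) * S) := by
    intro m f
    simp only [map_sum, Matrix.mul_sum, Matrix.sum_mul, Finset.smul_sum]
  have htr : ∀ Y : Matrix (Fin d) (Fin d) ℂ, (S * Ed Y * S).trace = ((E ρ) * Y).trace := by
    intro Y
    calc (S * Ed Y * S).trace = (S * S * Ed Y).trace := Matrix.trace_mul_cycle S (Ed Y) S
      _ = (ρᴴ * Ed Y).trace := by rw [hρ.sqrt_mul_self, hρ.1]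
      _ = ((E ρ)ᴴ * Y).trace := (hadj ρ Y).symm
      _ = ((E ρ) * Y).trace := by rw [(hE ρ hρ).1]
  have htr1 : ((c:ℂ) • (S * Ed 1 * S)).trace = 1 := by
    rw [Matrix.trace_smul, htr 1, Matrix.mul_one, psd_trace_re (hE ρ hρ), smul_eq_mul,
      ← Complex.ofReal_mul, hcdef, inv_mul_cancel₀ hpne]
    simp
  unfold SR IR
  apply csInf_le_csInf
  · exact ⟨0, fun t ht => ht.1⟩
  · -- the feasible set for IR is nonempty
    rcases Nat.eq_zero_or_pos nx with hnx | hnx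
    · subst hnx
      refine ⟨0, le_refl 0, B, hB, 1, (fun _ => 1), (fun x a l => 1),
        ⟨fun l => Matrix.PosSemidef.one, by simp⟩, fun x a l => zero_le_one,
        fun x l => x.elim0, fun x a => x.elim0⟩
    · obtain ⟨x0⟩ : Nonempty (Fin nx) := ⟨⟨0, hnx⟩⟩
      have hna : 0 < na := by
        rcases Nat.eq_zero_or_pos na with hna | hna
        · exfalso
          have h := congrArg Matrix.trace (hB.2 x0)
          subst hna
          simp only [Finset.univ_eq_empty, Finset.sum_empty, Matrix.trace_zero,
            Matrix.trace_one, Fintype.card_fin] at h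
          exact (Nat.cast_ne_zero (R := ℂ)).mpr (by omega) h.symm
        · exact hna
      have hnaR : ((na:ℝ)) ≠ 0 := by positivity
      have hnaC : ((na:ℂ)) ≠ 0 := Nat.cast_ne_zero.mpr (by omega)
      set N : Fin nx → Fin na → Matrix (Fin d) (Fin d) ℂ :=
        fun x a => ((((na:ℝ)⁻¹ : ℝ)) : ℂ) • ((((1 + na)/na : ℝ) : ℂ) • 1 - B x a) with hNdef
      have hone_sub : ∀ x a, (1 : Matrix (Fin d) (Fin d) ℂ) - B x a
          = ∑ a' ∈ Finset.univ.erase a, B x a' := by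
        intro x a
        rw [← hB.2 x, ← Finset.add_sum_erase _ _ (Finset.mem_univ a)]
        simp
      have hsubpsd : ∀ x a, ((((1 + na)/na : ℝ) : ℂ) • 1 - B x a).PosSemidef := by
        intro x a
        have hr : ((((1 + na)/na : ℝ) : ℂ) • (1 : Matrix (Fin d) (Fin d) ℂ) - B x a
            = (((1:ℝ)/na : ℝ) : ℂ) • 1 + (1 - B x a)) := by
          match_scalars
          · push_cast
            field_simp
          · ring
        rw [hr, hone_sub x a]
        exact (psd_smul_real (c := (1:ℝ)/na) Matrix.PosSemidef.one (by positivity)).add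
          (psd_sum _ _ fun a' _ => hB.1 x a')
      have hNma : IsMA N := by
        constructor
        · intro x a
          simp only [hNdef]
          exact psd_smul_real (c := (na:ℝ)⁻¹) (hsubpsd x a) (by positivity)
        · intro x
          simp only [hNdef]
          rw [← Finset.smul_sum, Finset.sum_sub_distrib, hB.2 x, Finset.sum_const,
            Finset.card_univ, Fintype.card_fin, ← Nat.cast_smul_eq_nsmul ℂ na]
          match_scalars
          push_cast
          field_simp
          ring
      refine ⟨(na:ℝ), by positivity, N, hNma, na, (fun _ => ((((na:ℝ)⁻¹ : ℝ)) : ℂ) • 1),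
        (fun x a l => if a = l then 1 else 0), ?_, ?_, ?_, ?_⟩
      · constructor
        · intro l
          exact psd_smul_real (c := (na:ℝ)⁻¹) Matrix.PosSemidef.one (by positivity)
        · rw [Finset.sum_const, Finset.card_univ, Fintype.card_fin,
            ← Nat.cast_smul_eq_nsmul ℂ na]
          match_scalars
          push_cast
          field_simp
      · intro x a l
        dsimp only
        split <;> norm_num
      · intro x l
        simp
      · intro x a
        have hmix : (((1 + (na:ℝ) : ℝ))⁻¹ : ℂ) • (B x a + (((na:ℝ)):ℂ) • N x a)
            = ((((na:ℝ)⁻¹ : ℝ)) : ℂ) • 1 := by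
          simp only [hNdef]
          have h1 : (1 : ℂ) + (na:ℂ) ≠ 0 := by
            intro hcon
            have h2 : ((1 + na : ℝ) : ℂ) = 0 := by push_cast; linear_combination hcon
            rw [Complex.ofReal_eq_zero] at h2
            have h3 : (0:ℝ) < 1 + na := by positivity
            linarith
          match_scalars
          all_goals push_cast
          all_goals field_simp
          all_goals ring_nf
        beta_reduce
        rw [hmix, eq_comm]
        simp [apply_ite (fun (y:ℝ) => (y:ℂ)), ite_smul]
  · -- inclusion of the feasible sets
    rintro t ⟨ht0, N, hN, nl, G, pr, hG, hpr0, hpr1, hJM⟩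
    refine ⟨ht0, fun x a => (c:ℂ) • (S * Ed (N x a) * S),
      ⟨fun x a => hTpsd (hN.1 x a), (c:ℂ) • (S * Ed 1 * S),
        ⟨hTpsd Matrix.PosSemidef.one, htr1⟩, fun x => ?_⟩, ?_⟩
    · rw [← hTsum, hN.2 x]
    · set τ : Fin nl → Matrix (Fin d) (Fin d) ℂ := fun l => (c:ℂ) • (S * Ed (G l) * S) with hτ
      set q : Fin nl → ℝ := fun l => (τ l).trace.re with hqdef
      have hτpsd : ∀ l, (τ l).PosSemidef := fun l => hTpsd (hG.1 l)
      have hτtr : ∀ l, (τ l).trace = ((q l : ℝ) : ℂ) := fun l => psd_trace_re (hτpsd l)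
      have hq0 : ∀ l, 0 ≤ q l := fun l => psd_trace_re_nonneg (hτpsd l)
      have hτ0 : ∀ l, q l = 0 → τ l = 0 := fun l h =>
        psd_trace_eq_zero (hτpsd l) (by rw [hτtr l, h]; simp)
      refine ⟨nl, q, pr, fun l => if q l = 0 then ρ else (((q l)⁻¹ : ℝ) : ℂ) • τ l,
        hq0, ?_, hpr0, hpr1, ?_, ?_⟩
      · have hsum : ∑ l, τ l = (c:ℂ) • (S * Ed 1 * S) := by
          rw [hτ, ← hTsum, hG.2]
        have htr2 : (∑ l, τ l).trace = 1 := by rw [hsum, htr1]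
        have : ∑ l, q l = ((∑ l, τ l).trace).re := by
          rw [Matrix.trace_sum, Complex.re_sum]
        rw [this, htr2]
        simp
      · intro l
        beta_reduce
        by_cases h : q l = 0
        · rw [if_pos h]; exact ⟨hρ, hρ1⟩
        · rw [if_neg h]
          refine ⟨psd_smul_real (hτpsd l) (inv_nonneg.mpr (hq0 l)), ?_⟩
          rw [Matrix.trace_smul, hτtr l, smul_eq_mul, ← Complex.ofReal_mul,
            inv_mul_cancel₀ h]
          simp
      · intro x a
        beta_reduce
        have hline : (((1 + t : ℝ))⁻¹ : ℂ) • ((c:ℂ) • (S * Ed (B x a) * S)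
              + (t:ℂ) • ((c:ℂ) • (S * Ed (N x a) * S)))
            = (c:ℂ) • (S * Ed ((((1 + t : ℝ))⁻¹ : ℂ) • (B x a + (t:ℂ) • N x a)) * S) := by
          rw [_root_.map_smul, map_add, _root_.map_smul]
          simp only [Matrix.smul_mul, Matrix.mul_smul, Matrix.mul_add, Matrix.add_mul, smul_add]
          module
        calc (((1 + t : ℝ))⁻¹ : ℂ) • ((c:ℂ) • (S * Ed (B x a) * S)
              + (t:ℂ) • ((c:ℂ) • (S * Ed (N x a) * S)))
            = (c:ℂ) • (S * Ed ((((1 + t : ℝ))⁻¹ : ℂ) • (B x a + (t:ℂ) • N x a)) * S) := hline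
          _ = (c:ℂ) • (S * Ed (∑ l, (pr x a l : ℂ) • G l) * S) := by
              have hJM' : (((1 + t : ℝ))⁻¹ : ℂ) • (B x a + (t:ℂ) • N x a)
                  = ∑ l, ((pr x a l : ℝ) : ℂ) • G l := hJM x a
              rw [hJM']
          _ = ∑ l, (pr x a l : ℂ) • τ l := by
              rw [map_sum]
              simp only [_root_.map_smul, Matrix.mul_sum, Matrix.sum_mul, Finset.smul_sum,
                Matrix.smul_mul, Matrix.mul_smul]
              exact Finset.sum_congr rfl fun l _ => smul_comm _ _ _
          _ = ∑ l, ((q l * pr x a l : ℝ) : ℂ) • (if q l = 0 then ρ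
                else (((q l)⁻¹ : ℝ) : ℂ) • τ l) := by
              refine Finset.sum_congr rfl fun l _ => ?_
              by_cases h : q l = 0
              · rw [if_pos h, hτ0 l h, h]
                simp
              · rw [if_neg h]
                have hqC : ((q l : ℝ) : ℂ) ≠ 0 := Complex.ofReal_ne_zero.mpr h
                conv_rhs => rw [smul_smul]
                congr 1
                push_cast
                field_simp
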